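/- Let (Ω, 𝔉, P) be a probability space equipped with a measurable action τ of ℝ^d under which P is stationary, and let 𝓘 ⊆ 𝔉 be the sub-σ-algebra of invariant sets. Let F ∈ L¹(Ω, P), e ∈ ℝ^d with e ≠ 0, and suppose there exists G ∈ L¹(Ω, P) such that ‖ h^{-1}(F ∘ τ(he, ·) − F) − G ‖_{L¹(P)} → 0 as h → 0. Then the conditional expectation of G with respect to 𝓘 vanishes: E[G | 𝓘] = 0 P-almost surely. -/

import Mathlib

open MeasureTheory Filter
open scoped Topology

/-- The σ-algebra of sets invariant under the action `τ` of `ℝ^d`. -/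
def invariantSigma {Ω : Type*} [MeasurableSpace Ω] {d : ℕ}
    (τ : (Fin d → ℝ) → Ω → Ω) : MeasurableSpace Ω where
  MeasurableSet' A := MeasurableSet A ∧ ∀ x, τ x ⁻¹' A = A
  measurableSet_empty := ⟨MeasurableSet.empty, fun _ => Set.preimage_empty⟩
  measurableSet_compl := fun A hA =>
    ⟨hA.1.compl, fun x => by rw [Set.preimage_compl, hA.2 x]⟩
  measurableSet_iUnion := fun f hf =>
    ⟨MeasurableSet.iUnion fun i => (hf i).1, fun x => by
      rw [Set.preimage_iUnion]
      exact Set.iUnion_congr fun i => (hf i).2 x⟩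

/-- If `P` is stationary under a measurable `ℝ^d`-action `τ` and `G ∈ L¹` is the `L¹`-limit of
the difference quotients `h⁻¹(F ∘ τ_{he} - F)` of some `F ∈ L¹` along a direction `e ≠ 0`,
then the conditional expectation of `G` with respect to the invariant σ-algebra vanishes
`P`-almost surely. -/
theorem condExp_generator_eq_zero
    {Ω : Type*} [MeasurableSpace Ω] {d : ℕ}
    (τ : (Fin d → ℝ) → Ω → Ω)
    (hτ_meas : Measurable fun q : (Fin d → ℝ) × Ω => τ q.1 q.2)
    (hτ_zero : τ 0 = id)
    (hτ_add : ∀ x y : Fin d → ℝ, τ (x + y) = τ x ∘ τ y)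
    (P : Measure Ω) [IsProbabilityMeasure P]
    (hstat : ∀ x : Fin d → ℝ, Measure.map (τ x) P = P)
    (F G : Ω → ℝ) (hF : Integrable F P) (hG : Integrable G P)
    (e : Fin d → ℝ) (he : e ≠ 0)
    (hconv : Tendsto (fun h : ℝ => ∫ ω, |(F (τ (h • e) ω) - F ω) / h - G ω| ∂P)
      (𝓝[≠] 0) (𝓝 0)) :
    P[G|invariantSigma τ] =ᵐ[P] 0 := by
  classical
  have hm : invariantSigma τ ≤ ‹MeasurableSpace Ω› := fun s hs => hs.1
  haveI : SigmaFinite (P.trim hm) := by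
    haveI : IsFiniteMeasure (P.trim hm) := isFiniteMeasure_trim hm
    infer_instance
  have hτx : ∀ x, Measurable (τ x) := fun x =>
    hτ_meas.comp (measurable_prodMk_left)
  have hint_comp : ∀ x, Integrable (fun ω => F (τ x ω)) P := by
    intro x
    have : Integrable F (Measure.map (τ x) P) := by rw [hstat x]; exact hF
    exact (integrable_map_measure (by rw [hstat x]; exact hF.aestronglyMeasurable) (hτx x).aemeasurable).mp this
  have key : ∀ A : Set Ω, MeasurableSet[invariantSigma τ] A → ∫ ω in A, G ω ∂P = 0 := by
    intro A hA
    obtain ⟨hAm, hAinv⟩ := hA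
    have hrestrict : ∀ x, Measure.map (τ x) (P.restrict A) = P.restrict A := by
      intro x
      have h1 := Measure.restrict_map (hτx x) hAm (μ := P)
      rw [hAinv x, hstat x] at h1
      exact h1.symm
    have hFA : ∀ x, ∫ ω in A, F (τ x ω) ∂P = ∫ ω in A, F ω ∂P := by
      intro x
      have h1 : ∫ ω, F ω ∂(Measure.map (τ x) (P.restrict A)) = ∫ ω in A, F (τ x ω) ∂P :=
        integral_map (hτx x).aemeasurable
          (by rw [hrestrict x]; exact hF.aestronglyMeasurable.restrict)
      rw [← h1, hrestrict x]
    have hbound : ∀ h : ℝ, h ≠ 0 →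
        |∫ ω in A, G ω ∂P| ≤ ∫ ω, |(F (τ (h • e) ω) - F ω) / h - G ω| ∂P := by
      intro h hh
      set x := h • e
      have hdint : Integrable (fun ω => (F (τ x ω) - F ω) / h) P :=
        ((hint_comp x).sub hF).div_const h
      have hdzero : ∫ ω in A, (F (τ x ω) - F ω) / h ∂P = 0 := by
        rw [integral_div, integral_sub ((hint_comp x).restrict) (hF.restrict), hFA x,
          sub_self, zero_div]
      have hsplit : ∫ ω in A, ((F (τ x ω) - F ω) / h - G ω) ∂P = - ∫ ω in A, G ω ∂P := by
        rw [integral_sub (hdint.restrict) (hG.restrict), hdzero, zero_sub]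
      calc |∫ ω in A, G ω ∂P|
          = |∫ ω in A, ((F (τ x ω) - F ω) / h - G ω) ∂P| := by rw [hsplit, abs_neg]
        _ ≤ ∫ ω in A, |(F (τ x ω) - F ω) / h - G ω| ∂P :=
            by simpa [Real.norm_eq_abs] using norm_integral_le_integral_norm (μ := P.restrict A) fun ω => (F (τ x ω) - F ω) / h - G ω
        _ ≤ ∫ ω, |(F (τ x ω) - F ω) / h - G ω| ∂P := by
            apply setIntegral_le_integral (hdint.sub hG).abs
            filter_upwards with ω using abs_nonneg _
    have hev : ∀ᶠ h in 𝓝[≠] (0:ℝ),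
        |∫ ω in A, G ω ∂P| ≤ ∫ ω, |(F (τ (h • e) ω) - F ω) / h - G ω| ∂P := by
      filter_upwards [eventually_mem_nhdsWithin] with h hh
      exact hbound h hh
    have hle : |∫ ω in A, G ω ∂P| ≤ 0 := ge_of_tendsto hconv hev
    exact abs_nonpos_iff.mp hle
  have h0 : (0 : Ω → ℝ) =ᵐ[P] P[G|invariantSigma τ] := by
    refine ae_eq_condExp_of_forall_setIntegral_eq hm hG
      (fun s _ _ => (integrable_zero _ _ _).integrableOn)
      (fun s hs _ => ?_) ?_
    · simp [key s hs]
    · exact stronglyMeasurable_zero.aestronglyMeasurable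
  exact h0.symm
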